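/- Fix m ≥ 0 and consider symmetric noncrossing perfect matchings M on [±m] with at most one trivial block (a block {i,−i}). The number of such matchings equals the Catalan number C_k = (1/(k+1))·C(2k,k), where k = ⌈m/2⌉. -/

import Mathlib

open Finset
set_option maxHeartbeats 800000

/-- The set `[±m] = {-m, …, -1, 1, …, m}`. -/
def pmSet (m : ℕ) : Set ℤ := {i | i ≠ 0 ∧ |i| ≤ (m : ℤ)}

/-- A symmetric noncrossing perfect matching on `[±m]`. -/
def IsNCSP (m : ℕ) (M : Finset (Finset ℤ)) : Prop :=
  (∀ b ∈ M, b.card = 2 ∧ (b : Set ℤ) ⊆ pmSet m) ∧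
  (∀ b ∈ M, ∀ b' ∈ M, b ≠ b' → Disjoint b b') ∧
  (∀ i ∈ pmSet m, ∃ b ∈ M, i ∈ b) ∧
  (∀ b ∈ M, b.image (fun x => -x) ∈ M) ∧
  (∀ i j k l : ℤ, ({i, k} : Finset ℤ) ∈ M → ({j, l} : Finset ℤ) ∈ M →
    i < j → j < k → k < l → False)

/-- Noncrossing perfect matching on a set `s ⊆ ℤ`. -/
def NCM (s : Set ℤ) (M : Finset (Finset ℤ)) : Prop :=
  (∀ b ∈ M, b.card = 2 ∧ (b : Set ℤ) ⊆ s) ∧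
  (∀ b ∈ M, ∀ b' ∈ M, b ≠ b' → Disjoint b b') ∧
  (∀ i ∈ s, ∃ b ∈ M, i ∈ b) ∧
  (∀ i j k l : ℤ, ({i, k} : Finset ℤ) ∈ M → ({j, l} : Finset ℤ) ∈ M →
    i < j → j < k → k < l → False)

open scoped Classical in
/-- Finset of all noncrossing perfect matchings of a finite set. -/
noncomputable def NCMF (s : Finset ℤ) : Finset (Finset (Finset ℤ)) :=
  (s.powerset.powerset).filter (fun M => NCM (↑s) M)

lemma mem_NCMF {s : Finset ℤ} {M : Finset (Finset ℤ)} : M ∈ NCMF s ↔ NCM (↑s) M := by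
  classical
  constructor
  · intro h; exact (mem_filter.mp h).2
  · intro h
    have hsub : M ∈ s.powerset.powerset := by
      rw [mem_powerset]
      intro b hb
      rw [mem_powerset]
      intro x hx
      exact h.1 b hb |>.2 hx
    simp only [NCMF, mem_filter]
    exact ⟨hsub, h⟩

/-- two-element block extraction -/
lemma block_pair {M : Finset (Finset ℤ)} {s : Set ℤ} (h : NCM s M) {b : Finset ℤ}
    (hb : b ∈ M) {x : ℤ} (hx : x ∈ b) : ∃ y, y ≠ x ∧ b = {x, y} := by
  obtain ⟨u, v, huv, rfl⟩ := Finset.card_eq_two.mp (h.1 b hb).1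
  rcases Finset.mem_insert.mp hx with rfl | hxv
  · exact ⟨v, fun h => huv h.symm, rfl⟩
  · rcases Finset.mem_singleton.mp hxv with rfl
    exact ⟨u, huv, by rw [Finset.pair_comm]⟩

/-- Perfect matchings have evenly many points: `s.card = 2 * M.card`. -/
lemma NCM_card {s : Finset ℤ} {M : Finset (Finset ℤ)} (h : NCM (↑s) M) :
    s.card = 2 * M.card := by
  classical
  have hs : s = M.biUnion id := by
    ext x
    simp only [mem_biUnion, id]
    constructor
    · intro hx; exact h.2.2.1 x (by exact_mod_cast hx)
    · rintro ⟨b, hb, hxb⟩; exact_mod_cast (h.1 b hb).2 hxb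
  rw [hs]
  rw [show M.biUnion id = M.biUnion (fun b => b) from rfl,
    card_biUnion (fun b hb b' hb' hne => h.2.1 b hb b' hb' hne)]
  rw [Finset.sum_congr rfl (fun b hb => (h.1 b hb).1), Finset.sum_const, smul_eq_mul,
    Nat.mul_comm]

lemma NCMF_odd {s : Finset ℤ} (hs : Odd s.card) : NCMF s = ∅ := by
  rw [Finset.eq_empty_iff_forall_notMem]
  intro M hM
  have := NCM_card (mem_NCMF.mp hM)
  rw [this] at hs
  exact (Nat.not_odd_iff_even.mpr ⟨M.card, two_mul _⟩) hs

lemma NCMF_empty : NCMF (∅ : Finset ℤ) = {∅} := by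
  ext M
  rw [mem_NCMF]
  simp only [Finset.mem_singleton]
  constructor
  · intro h
    rw [Finset.eq_empty_iff_forall_notMem]
    intro b hb
    have h2 := h.1 b hb
    have : b = ∅ := by
      rw [Finset.eq_empty_iff_forall_notMem]
      intro x hx
      simpa using h2.2 hx
    rw [this] at h2; simp at h2
  · rintro rfl
    refine ⟨by simp, by simp, by simp, by simp⟩

lemma timage_timage (t : ℤ) (M : Finset (Finset ℤ)) :
    (M.image (Finset.image (t + ·))).image (Finset.image ((-t) + ·)) = M := by
  rw [Finset.image_image]
  have : (Finset.image ((-t) + ·)) ∘ (Finset.image (t + ·)) = id := by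
    funext b
    rw [Function.comp_apply, Finset.image_image]
    simp [Function.comp_def]
  rw [this, Finset.image_id]

lemma NCM_image {s : Finset ℤ} {M : Finset (Finset ℤ)} (t : ℤ) (h : NCM (↑s) M) :
    NCM (↑(s.image (t + ·))) (M.image (Finset.image (t + ·))) := by
  have hinj : Function.Injective (t + ·) := fun a b hab => by simpa using hab
  refine ⟨?_, ?_, ?_, ?_⟩
  · intro c hc
    obtain ⟨b, hb, rfl⟩ := Finset.mem_image.mp hc
    refine ⟨by rw [Finset.card_image_of_injective _ hinj]; exact (h.1 b hb).1, ?_⟩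
    rw [Finset.coe_image, Finset.coe_image]
    exact Set.image_mono (h.1 b hb).2
  · intro c hc c' hc' hne
    obtain ⟨b, hb, rfl⟩ := Finset.mem_image.mp hc
    obtain ⟨b', hb', rfl⟩ := Finset.mem_image.mp hc'
    exact (Finset.disjoint_image hinj).mpr
      (h.2.1 b hb b' hb' (fun e => hne (by rw [e])))
  · intro i hi
    obtain ⟨x, hx, rfl⟩ := Finset.mem_image.mp (by exact_mod_cast hi)
    obtain ⟨b, hb, hxb⟩ := h.2.2.1 x (by exact_mod_cast hx)
    exact ⟨b.image (t + ·), Finset.mem_image_of_mem _ hb, Finset.mem_image_of_mem _ hxb⟩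
  · intro i j k l hik hjl hij hjk hkl
    have key : ∀ x y : ℤ, ({x, y} : Finset ℤ) ∈ M.image (Finset.image (t + ·)) →
        ({-t + x, -t + y} : Finset ℤ) ∈ M := by
      intro x y hxy
      obtain ⟨b, hb, hbe⟩ := Finset.mem_image.mp hxy
      have : b = ({x, y} : Finset ℤ).image ((-t) + ·) := by
        rw [← hbe, Finset.image_image]
        have : (Finset.image ((-t) + ·)) ∘ (Finset.image (t + ·)) = id := by
          funext c; rw [Function.comp_apply, Finset.image_image]; simp [Function.comp_def]
        simp [Function.comp_def]
      rw [this] at hb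
      simpa using hb
    exact h.2.2.2 (-t + i) (-t + j) (-t + k) (-t + l) (key _ _ hik) (key _ _ hjl)
      (by omega) (by omega) (by omega)

lemma image_shift_shift (t : ℤ) (s : Finset ℤ) : (s.image (t + ·)).image ((-t) + ·) = s := by
  rw [Finset.image_image]
  simp [Function.comp_def]

lemma NCMF_image_card (t : ℤ) (s : Finset ℤ) :
    (NCMF (s.image (t + ·))).card = (NCMF s).card := by
  have hi : ∀ M ∈ NCMF (s.image (t + ·)), M.image (Finset.image ((-t) + ·)) ∈ NCMF s := by
    intro M hM
    have := NCM_image (-t) (mem_NCMF.mp hM)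
    rw [image_shift_shift] at this
    exact mem_NCMF.mpr this
  have hj : ∀ M ∈ NCMF s, M.image (Finset.image (t + ·)) ∈ NCMF (s.image (t + ·)) := by
    intro M hM
    exact mem_NCMF.mpr (NCM_image t (mem_NCMF.mp hM))
  exact Finset.card_bij' (i := fun M _ => M.image (Finset.image ((-t) + ·)))
    (j := fun M _ => M.image (Finset.image (t + ·))) (fun M hM => hi M hM)
    (fun M hM => hj M hM)
    (fun M _ => by simpa using timage_timage (-t) M)
    (fun M _ => timage_timage t M)

lemma NCMF_Ico_card (a b t : ℤ) :
    (NCMF (Finset.Ico (t + a) (t + b))).card = (NCMF (Finset.Ico a b)).card := by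
  rw [← image_add_left_Ico, NCMF_image_card]

lemma pair_eq {a b c d : ℤ} (h : ({a, b} : Finset ℤ) = {c, d}) :
    (a = c ∧ b = d) ∨ (a = d ∧ b = c) := by
  have h1 : a ∈ ({c, d} : Finset ℤ) := h ▸ (by simp)
  have h2 : b ∈ ({c, d} : Finset ℤ) := h ▸ (by simp)
  have h3 : c ∈ ({a, b} : Finset ℤ) := h.symm ▸ (by simp)
  have h4 : d ∈ ({a, b} : Finset ℤ) := h.symm ▸ (by simp)
  simp only [Finset.mem_insert, Finset.mem_singleton] at h1 h2 h3 h4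
  omega

lemma separation {B t : ℤ} (ht1 : 1 ≤ t) {M : Finset (Finset ℤ)}
    (hM : NCM (↑(Finset.Ico (0:ℤ) B)) M) (h0t : ({0, t} : Finset ℤ) ∈ M)
    {b : Finset ℤ} (hb : b ∈ M) (hne : b ≠ {0, t}) :
    b ⊆ Finset.Ico 1 t ∨ b ⊆ Finset.Ico (t + 1) B := by
  suffices H : ∀ u v : ℤ, u < v → ({u, v} : Finset ℤ) ∈ M → ({u, v} : Finset ℤ) ≠ {0, t} →
      ({u, v} : Finset ℤ) ⊆ Finset.Ico 1 t ∨ ({u, v} : Finset ℤ) ⊆ Finset.Ico (t + 1) B by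
    obtain ⟨x, y, hxy, rfl⟩ := Finset.card_eq_two.mp (hM.1 b hb).1
    rcases lt_or_gt_of_ne hxy with h | h
    · exact H x y h hb hne
    · have hcomm : ({x, y} : Finset ℤ) = {y, x} := Finset.pair_comm x y
      rw [hcomm] at hb hne ⊢
      exact H y x h hb hne
  intro u v huv hm hne'
  have h2 := hM.2.1 _ hm _ h0t hne'
  have hu0 : (0:ℤ) ≤ u ∧ u < B := by
    have := (hM.1 _ hm).2 (show u ∈ (↑({u, v} : Finset ℤ) : Set ℤ) by simp)
    simpa [Finset.mem_Ico] using this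
  have hv0 : (0:ℤ) ≤ v ∧ v < B := by
    have := (hM.1 _ hm).2 (show v ∈ (↑({u, v} : Finset ℤ) : Set ℤ) by simp)
    simpa [Finset.mem_Ico] using this
  have hunt : u ≠ 0 ∧ u ≠ t := by
    have := Finset.disjoint_left.mp h2 (show u ∈ ({u, v} : Finset ℤ) by simp)
    simpa using this
  have hvnt : v ≠ 0 ∧ v ≠ t := by
    have := Finset.disjoint_left.mp h2 (show v ∈ ({u, v} : Finset ℤ) by simp)
    simpa using this
  have hu1 : 1 ≤ u := by omega
  have hcross : ¬(u < t ∧ t < v) := by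
    rintro ⟨hh1, hh2⟩
    exact hM.2.2.2 0 u t v h0t hm (by omega) hh1 hh2
  by_cases hvt : v < t
  · left
    intro z hz
    rcases Finset.mem_insert.mp hz with rfl | hz
    · simp [Finset.mem_Ico]; omega
    · rcases Finset.mem_singleton.mp hz with rfl
      simp [Finset.mem_Ico]; omega
  · right
    have hvt' : t < v := by omega
    have hut : t < u := by
      rcases lt_trichotomy u t with h | h | h
      · exact absurd ⟨h, hvt'⟩ hcross
      · exact absurd h hunt.2
      · exact h
    intro z hz
    rcases Finset.mem_insert.mp hz with rfl | hz
    · simp [Finset.mem_Ico]; omega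
    · rcases Finset.mem_singleton.mp hz with rfl
      simp [Finset.mem_Ico]; omega

lemma mem_coe_Ico {a b z : ℤ} : z ∈ (↑(Finset.Ico a b) : Set ℤ) ↔ a ≤ z ∧ z < b := by
  simp [Finset.mem_Ico]

lemma piece_card {B t : ℤ} (ht1 : 1 ≤ t) (ht2 : t < B) :
    ((NCMF (Finset.Ico (0:ℤ) B)).filter (fun M => ({0, t} : Finset ℤ) ∈ M)).card
    = (NCMF (Finset.Ico (1:ℤ) t)).card * (NCMF (Finset.Ico (t + 1) B)).card := by
  classical
  rw [← Finset.card_product]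
  have hi : ∀ M ∈ (NCMF (Finset.Ico (0:ℤ) B)).filter (fun M => ({0, t} : Finset ℤ) ∈ M),
      (M.filter (fun b => b ⊆ Finset.Ico (1:ℤ) t),
        M.filter (fun b => b ⊆ Finset.Ico (t + 1) B)) ∈
        (NCMF (Finset.Ico (1:ℤ) t)) ×ˢ (NCMF (Finset.Ico (t + 1) B)) := by
    intro M hM
    obtain ⟨hM', h0t⟩ := Finset.mem_filter.mp hM
    have hN := mem_NCMF.mp hM'
    rw [Finset.mem_product]
    constructor
    · rw [mem_NCMF]
      refine ⟨?_, ?_, ?_, ?_⟩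
      · intro b hb
        obtain ⟨hbM, hbs⟩ := Finset.mem_filter.mp hb
        exact ⟨(hN.1 b hbM).1, by exact_mod_cast Finset.coe_subset.mpr hbs⟩
      · intro b hb b' hb' hne
        exact hN.2.1 b (Finset.mem_of_mem_filter b hb) b' (Finset.mem_of_mem_filter b' hb') hne
      · intro x hx
        have hx' : 1 ≤ x ∧ x < t := mem_coe_Ico.mp hx
        obtain ⟨b, hbM, hxb⟩ := hN.2.2.1 x (mem_coe_Ico.mpr (by omega))
        have hbne : b ≠ {0, t} := by
          rintro rfl
          rcases Finset.mem_insert.mp hxb with rfl | h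
          · omega
          · rcases Finset.mem_singleton.mp h with rfl; omega
        rcases separation ht1 hN h0t hbM hbne with h | h
        · exact ⟨b, Finset.mem_filter.mpr ⟨hbM, h⟩, hxb⟩
        · exfalso
          have := Finset.mem_Ico.mp (h hxb)
          omega
      · intro i j k l hik hjl hij hjk hkl
        exact hN.2.2.2 i j k l (Finset.mem_of_mem_filter _ hik)
          (Finset.mem_of_mem_filter _ hjl) hij hjk hkl
    · rw [mem_NCMF]
      refine ⟨?_, ?_, ?_, ?_⟩
      · intro b hb
        obtain ⟨hbM, hbs⟩ := Finset.mem_filter.mp hb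
        exact ⟨(hN.1 b hbM).1, by exact_mod_cast Finset.coe_subset.mpr hbs⟩
      · intro b hb b' hb' hne
        exact hN.2.1 b (Finset.mem_of_mem_filter b hb) b' (Finset.mem_of_mem_filter b' hb') hne
      · intro x hx
        have hx' : t + 1 ≤ x ∧ x < B := mem_coe_Ico.mp hx
        obtain ⟨b, hbM, hxb⟩ := hN.2.2.1 x (mem_coe_Ico.mpr (by omega))
        have hbne : b ≠ {0, t} := by
          rintro rfl
          rcases Finset.mem_insert.mp hxb with rfl | h
          · omega
          · rcases Finset.mem_singleton.mp h with rfl; omega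
        rcases separation ht1 hN h0t hbM hbne with h | h
        · exfalso
          have := Finset.mem_Ico.mp (h hxb)
          omega
        · exact ⟨b, Finset.mem_filter.mpr ⟨hbM, h⟩, hxb⟩
      · intro i j k l hik hjl hij hjk hkl
        exact hN.2.2.2 i j k l (Finset.mem_of_mem_filter _ hik)
          (Finset.mem_of_mem_filter _ hjl) hij hjk hkl
  have hj : ∀ p ∈ (NCMF (Finset.Ico (1:ℤ) t)) ×ˢ (NCMF (Finset.Ico (t + 1) B)),
      insert ({0, t} : Finset ℤ) (p.1 ∪ p.2) ∈
        (NCMF (Finset.Ico (0:ℤ) B)).filter (fun M => ({0, t} : Finset ℤ) ∈ M) := by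
    intro p hp
    rw [Finset.mem_product] at hp
    have h1 := mem_NCMF.mp hp.1
    have h2 := mem_NCMF.mp hp.2
    have mem1 : ∀ b ∈ p.1, ∀ z ∈ b, 1 ≤ z ∧ z < t := by
      intro b hb z hz
      exact mem_coe_Ico.mp ((h1.1 b hb).2 (Finset.mem_coe.mpr hz))
    have mem2 : ∀ b ∈ p.2, ∀ z ∈ b, t + 1 ≤ z ∧ z < B := by
      intro b hb z hz
      exact mem_coe_Ico.mp ((h2.1 b hb).2 (Finset.mem_coe.mpr hz))
    refine Finset.mem_filter.mpr ⟨mem_NCMF.mpr ⟨?_, ?_, ?_, ?_⟩, Finset.mem_insert_self _ _⟩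
    · intro b hb
      rcases Finset.mem_insert.mp hb with rfl | hb
      · refine ⟨Finset.card_pair (by omega), ?_⟩
        intro z hz
        rcases Finset.mem_insert.mp (Finset.mem_coe.mp hz) with rfl | hz'
        · exact mem_coe_Ico.mpr (by omega)
        · rcases Finset.mem_singleton.mp hz' with rfl
          exact mem_coe_Ico.mpr (by omega)
      · rcases Finset.mem_union.mp hb with hb | hb
        · refine ⟨(h1.1 b hb).1, ?_⟩
          intro z hz
          have := mem1 b hb z (Finset.mem_coe.mp hz)
          exact mem_coe_Ico.mpr (by omega)
        · refine ⟨(h2.1 b hb).1, ?_⟩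
          intro z hz
          have := mem2 b hb z (Finset.mem_coe.mp hz)
          exact mem_coe_Ico.mpr (by omega)
    · intro b hb b' hb' hne
      have pairdisj : ∀ c ∈ p.1, ∀ c' ∈ p.2, Disjoint c c' := by
        intro c hc c' hc'
        rw [Finset.disjoint_left]
        intro z hz hz'
        have := mem1 c hc z hz
        have := mem2 c' hc' z hz'
        omega
      have zerodisj : ∀ c, (c ∈ p.1 ∨ c ∈ p.2) → Disjoint ({0, t} : Finset ℤ) c := by
        intro c hc
        rw [Finset.disjoint_left]
        intro z hz hz'
        have hz0 : z = 0 ∨ z = t := by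
          rcases Finset.mem_insert.mp hz with rfl | h
          · left; rfl
          · right; exact Finset.mem_singleton.mp h
        rcases hc with hc | hc
        · have := mem1 c hc z hz'; omega
        · have := mem2 c hc z hz'; omega
      rcases Finset.mem_insert.mp hb with rfl | hb
      · rcases Finset.mem_insert.mp hb' with rfl | hb'
        · exact absurd rfl hne
        · exact zerodisj b' (Finset.mem_union.mp hb')
      · rcases Finset.mem_insert.mp hb' with rfl | hb'
        · exact (zerodisj b (Finset.mem_union.mp hb)).symm
        · rcases Finset.mem_union.mp hb with hb | hb <;>
            rcases Finset.mem_union.mp hb' with hb' | hb'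
          · exact h1.2.1 b hb b' hb' hne
          · exact pairdisj b hb b' hb'
          · exact (pairdisj b' hb' b hb).symm
          · exact h2.2.1 b hb b' hb' hne
    · intro x hx
      have hx' : 0 ≤ x ∧ x < B := mem_coe_Ico.mp hx
      by_cases hx0 : x = 0 ∨ x = t
      · refine ⟨{0, t}, Finset.mem_insert_self _ _, ?_⟩
        rcases hx0 with rfl | rfl
        · simp
        · simp
      · push_neg at hx0
        by_cases hxt : x < t
        · obtain ⟨b, hb, hxb⟩ := h1.2.2.1 x (mem_coe_Ico.mpr (by omega))
          exact ⟨b, Finset.mem_insert_of_mem (Finset.mem_union_left _ hb), hxb⟩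
        · obtain ⟨b, hb, hxb⟩ := h2.2.2.1 x (mem_coe_Ico.mpr (by omega))
          exact ⟨b, Finset.mem_insert_of_mem (Finset.mem_union_right _ hb), hxb⟩
    · intro i j k l hik hjl hij hjk hkl
      have bnd1 : ∀ u v : ℤ, ({u, v} : Finset ℤ) ∈ p.1 → (1 ≤ u ∧ u < t) ∧ (1 ≤ v ∧ v < t) := by
        intro u v h
        exact ⟨mem1 _ h u (by simp), mem1 _ h v (by simp)⟩
      have bnd2 : ∀ u v : ℤ, ({u, v} : Finset ℤ) ∈ p.2 →
          (t + 1 ≤ u ∧ u < B) ∧ (t + 1 ≤ v ∧ v < B) := by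
        intro u v h
        exact ⟨mem2 _ h u (by simp), mem2 _ h v (by simp)⟩
      rcases Finset.mem_insert.mp hik with h | h
      · have hik' : i = 0 ∧ k = t := by
          rcases pair_eq h with ⟨rfl, rfl⟩ | ⟨rfl, rfl⟩
          · exact ⟨rfl, rfl⟩
          · omega
        rcases Finset.mem_insert.mp hjl with h' | h'
        · rcases pair_eq h' with ⟨rfl, rfl⟩ | ⟨rfl, rfl⟩ <;> omega
        · rcases Finset.mem_union.mp h' with h' | h'
          · have := bnd1 j l h'; omega
          · have := bnd2 j l h'; omega
      · rcases Finset.mem_union.mp h with h | h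
        · rcases Finset.mem_insert.mp hjl with h' | h'
          · have := bnd1 i k h
            rcases pair_eq h' with ⟨rfl, rfl⟩ | ⟨rfl, rfl⟩ <;> omega
          · rcases Finset.mem_union.mp h' with h' | h'
            · exact h1.2.2.2 i j k l h h' hij hjk hkl
            · have := bnd1 i k h; have := bnd2 j l h'; omega
        · rcases Finset.mem_insert.mp hjl with h' | h'
          · have := bnd2 i k h
            rcases pair_eq h' with ⟨rfl, rfl⟩ | ⟨rfl, rfl⟩ <;> omega
          · rcases Finset.mem_union.mp h' with h' | h'
            · have := bnd2 i k h; have := bnd1 j l h'; omega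
            · exact h2.2.2.2 i j k l h h' hij hjk hkl
  refine Finset.card_bij' (i := fun M _ => (M.filter (fun b => b ⊆ Finset.Ico (1:ℤ) t),
      M.filter (fun b => b ⊆ Finset.Ico (t + 1) B)))
    (j := fun p _ => insert ({0, t} : Finset ℤ) (p.1 ∪ p.2)) hi hj ?_ ?_
  · -- left inverse
    intro M hM
    obtain ⟨hM', h0t⟩ := Finset.mem_filter.mp hM
    have hN := mem_NCMF.mp hM'
    ext b
    simp only [Finset.mem_insert, Finset.mem_union, Finset.mem_filter]
    constructor
    · rintro (rfl | ⟨hb, _⟩ | ⟨hb, _⟩)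
      · exact h0t
      · exact hb
      · exact hb
    · intro hb
      by_cases hbe : b = {0, t}
      · exact Or.inl hbe
      · rcases separation ht1 hN h0t hb hbe with h | h
        · exact Or.inr (Or.inl ⟨hb, h⟩)
        · exact Or.inr (Or.inr ⟨hb, h⟩)
  · -- right inverse
    intro p hp
    rw [Finset.mem_product] at hp
    have h1 := mem_NCMF.mp hp.1
    have h2 := mem_NCMF.mp hp.2
    have mem1 : ∀ b ∈ p.1, ∀ z ∈ b, 1 ≤ z ∧ z < t := by
      intro b hb z hz
      exact mem_coe_Ico.mp ((h1.1 b hb).2 (Finset.mem_coe.mpr hz))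
    have mem2 : ∀ b ∈ p.2, ∀ z ∈ b, t + 1 ≤ z ∧ z < B := by
      intro b hb z hz
      exact mem_coe_Ico.mp ((h2.1 b hb).2 (Finset.mem_coe.mpr hz))
    have e1 : (insert ({0, t} : Finset ℤ) (p.1 ∪ p.2)).filter
        (fun b => b ⊆ Finset.Ico (1:ℤ) t) = p.1 := by
      ext b
      simp only [Finset.mem_filter, Finset.mem_insert, Finset.mem_union]
      constructor
      · rintro ⟨rfl | hb | hb, hsub⟩
        · exfalso
          have := Finset.mem_Ico.mp (hsub (show (0:ℤ) ∈ ({0, t} : Finset ℤ) by simp))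
          omega
        · exact hb
        · exfalso
          have hbne : b.Nonempty := Finset.card_pos.mp (by rw [(h2.1 b hb).1]; norm_num)
          obtain ⟨z, hz⟩ := hbne
          have := Finset.mem_Ico.mp (hsub hz)
          have := mem2 b hb z hz
          omega
      · intro hb
        refine ⟨Or.inr (Or.inl hb), ?_⟩
        intro z hz
        have := mem1 b hb z hz
        exact Finset.mem_Ico.mpr (by omega)
    have e2 : (insert ({0, t} : Finset ℤ) (p.1 ∪ p.2)).filter
        (fun b => b ⊆ Finset.Ico (t + 1) B) = p.2 := by
      ext b
      simp only [Finset.mem_filter, Finset.mem_insert, Finset.mem_union]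
      constructor
      · rintro ⟨rfl | hb | hb, hsub⟩
        · exfalso
          have := Finset.mem_Ico.mp (hsub (show (t:ℤ) ∈ ({0, t} : Finset ℤ) by simp))
          omega
        · exfalso
          have hbne : b.Nonempty := Finset.card_pos.mp (by rw [(h1.1 b hb).1]; norm_num)
          obtain ⟨z, hz⟩ := hbne
          have := Finset.mem_Ico.mp (hsub hz)
          have := mem1 b hb z hz
          omega
        · exact hb
      · intro hb
        refine ⟨Or.inr (Or.inr hb), ?_⟩
        intro z hz
        have := mem2 b hb z hz
        exact Finset.mem_Ico.mpr (by omega)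
    exact Prod.ext e1 e2

noncomputable def Fc (n : ℕ) : ℕ := (NCMF (Finset.Ico (0:ℤ) (2 * n))).card

lemma Fc_zero : Fc 0 = 1 := by
  simp only [Fc, Nat.cast_zero, mul_zero]
  rw [show Finset.Ico (0:ℤ) 0 = ∅ by simp, NCMF_empty]
  simp

lemma NCMF_Ico_card' (a : ℤ) (n : ℕ) : (NCMF (Finset.Ico a (a + 2 * n))).card = Fc n := by
  have := NCMF_Ico_card 0 (2 * n) a
  simpa [Fc] using this

lemma Fc_succ (n : ℕ) : Fc (n + 1) = ∑ j ∈ Finset.range (n + 1), Fc j * Fc (n - j) := by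
  classical
  have hB : (2 * ((n:ℤ) + 1)) = 2 * n + 2 := by ring
  have hdecomp : NCMF (Finset.Ico (0:ℤ) (2 * n + 2)) =
      (Finset.Ico (1:ℤ) (2 * n + 2)).biUnion
        (fun t => (NCMF (Finset.Ico (0:ℤ) (2 * n + 2))).filter
          (fun M => ({0, t} : Finset ℤ) ∈ M)) := by
    ext M
    simp only [Finset.mem_biUnion, Finset.mem_filter]
    constructor
    · intro hM
      have hN := mem_NCMF.mp hM
      obtain ⟨b, hb, h0b⟩ := hN.2.2.1 0 (mem_coe_Ico.mpr (by omega))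
      obtain ⟨y, hy0, rfl⟩ := block_pair hN hb h0b
      have hy : (0:ℤ) ≤ y ∧ y < 2 * n + 2 :=
        mem_coe_Ico.mp ((hN.1 _ hb).2 (show y ∈ (↑({0, y} : Finset ℤ) : Set ℤ) by simp))
      exact ⟨y, Finset.mem_Ico.mpr (by omega), hM, hb⟩
    · rintro ⟨t, _, hM, _⟩
      exact hM
  have hdisj : ∀ t ∈ Finset.Ico (1:ℤ) (2 * n + 2), ∀ t' ∈ Finset.Ico (1:ℤ) (2 * n + 2),
      t ≠ t' → Disjoint
        ((NCMF (Finset.Ico (0:ℤ) (2 * n + 2))).filter (fun M => ({0, t} : Finset ℤ) ∈ M))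
        ((NCMF (Finset.Ico (0:ℤ) (2 * n + 2))).filter (fun M => ({0, t'} : Finset ℤ) ∈ M)) := by
    intro t ht t' ht' hne
    rw [Finset.disjoint_left]
    intro M hMt hMt'
    obtain ⟨hM, h1⟩ := Finset.mem_filter.mp hMt
    obtain ⟨_, h2⟩ := Finset.mem_filter.mp hMt'
    have hN := mem_NCMF.mp hM
    have ht1 := Finset.mem_Ico.mp ht
    have ht1' := Finset.mem_Ico.mp ht'
    by_cases heq : ({0, t} : Finset ℤ) = ({0, t'} : Finset ℤ)
    · rcases pair_eq heq with ⟨_, h⟩ | ⟨h, h'⟩ <;> omega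
    · have := hN.2.1 _ h1 _ h2 heq
      have := Finset.disjoint_left.mp this (show (0:ℤ) ∈ ({0, t} : Finset ℤ) by simp)
      simp at this
  have hcard : Fc (n + 1) = ∑ t ∈ Finset.Ico (1:ℤ) (2 * n + 2),
      ((NCMF (Finset.Ico (0:ℤ) (2 * n + 2))).filter
        (fun M => ({0, t} : Finset ℤ) ∈ M)).card := by
    rw [Fc, show ((2:ℤ) * ((n + 1 : ℕ) : ℤ)) = 2 * (n:ℤ) + 2 from by push_cast; ring]
    conv_lhs => rw [hdecomp]
    exact Finset.card_biUnion hdisj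
  rw [hcard]
  have hterm : ∀ t ∈ Finset.Ico (1:ℤ) (2 * n + 2),
      ((NCMF (Finset.Ico (0:ℤ) (2 * n + 2))).filter
        (fun M => ({0, t} : Finset ℤ) ∈ M)).card
      = (NCMF (Finset.Ico (1:ℤ) t)).card * (NCMF (Finset.Ico (t + 1) (2 * n + 2))).card := by
    intro t ht
    have := Finset.mem_Ico.mp ht
    exact piece_card this.1 this.2
  rw [Finset.sum_congr rfl hterm]
  -- kill even t terms
  have heven : ∀ t ∈ Finset.Ico (1:ℤ) (2 * n + 2),
      ((NCMF (Finset.Ico (1:ℤ) t)).card * (NCMF (Finset.Ico (t + 1) (2 * n + 2))).card ≠ 0)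
        → Odd t := by
    intro t ht hne
    by_contra hodd
    have ht' := Finset.mem_Ico.mp ht
    rw [Int.not_odd_iff_even, Int.even_iff] at hodd
    have : Odd (Finset.Ico (1:ℤ) t).card := by
      rw [Int.card_Ico, Nat.odd_iff]
      omega
    rw [NCMF_odd this] at hne
    simp at hne
  rw [← Finset.sum_filter_of_ne heven]
  refine Finset.sum_nbij' (i := fun t => ((t - 1) / 2).toNat) (j := fun j => 2 * (j:ℤ) + 1)
    ?hi ?hj ?hli ?hri ?hval
  case hi =>
    intro t ht
    obtain ⟨ht1, ht2⟩ := Finset.mem_filter.mp ht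
    obtain ⟨r, hr⟩ := ht2
    have := Finset.mem_Ico.mp ht1
    rw [Finset.mem_range]
    omega
  case hj =>
    intro j hj
    rw [Finset.mem_range] at hj
    refine Finset.mem_filter.mpr ⟨Finset.mem_Ico.mpr (by push_cast; omega), ⟨j, by ring⟩⟩
  case hli =>
    intro t ht
    obtain ⟨ht1, ht2⟩ := Finset.mem_filter.mp ht
    obtain ⟨r, hr⟩ := ht2
    have := Finset.mem_Ico.mp ht1
    omega
  case hri =>
    intro j hj
    omega
  case hval =>
    intro t ht
    obtain ⟨ht1, ht2⟩ := Finset.mem_filter.mp ht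
    obtain ⟨r, hr⟩ := ht2
    have hb := Finset.mem_Ico.mp ht1
    set k := ((t - 1) / 2).toNat with hk
    have hkr : (k : ℤ) = r := by omega
    have hle : k ≤ n := by omega
    have ht' : t = 1 + 2 * (k : ℤ) := by omega
    have e1 : (NCMF (Finset.Ico (1:ℤ) t)).card = Fc k := by
      have h := NCMF_Ico_card' 1 k
      rw [← h]
      norm_num [ht']
    have e2 : (NCMF (Finset.Ico (t + 1) (2 * n + 2))).card = Fc (n - k) := by
      have h := NCMF_Ico_card' (t + 1) (n - k)
      rw [← h]
      have : (t + 1) + 2 * ((n - k : ℕ) : ℤ) = 2 * n + 2 := by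
        push_cast [Nat.cast_sub hle]
        omega
      rw [this]
    rw [e1, e2]

lemma Fc_eq_catalan (n : ℕ) : Fc n = catalan n := by
  induction n using Nat.strong_induction_on with
  | _ n ih =>
    match n with
    | 0 => rw [Fc_zero, catalan_zero]
    | Nat.succ n =>
      rw [Fc_succ, catalan_succ, Fin.sum_univ_eq_sum_range (fun j => catalan j * catalan (n - j)) (n+1)]
      refine Finset.sum_congr rfl ?_
      intro j hj
      rw [Finset.mem_range] at hj
      rw [ih j (by omega), ih (n - j) (by omega)]

lemma mem_pmSet {m : ℕ} {x : ℤ} : x ∈ pmSet m ↔ x ≠ 0 ∧ -(m:ℤ) ≤ x ∧ x ≤ m := by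
  simp [pmSet, abs_le]

lemma pair_image_neg (x y : ℤ) :
    ({x, y} : Finset ℤ).image (fun z => -z) = ({-x, -y} : Finset ℤ) := by
  simp [Finset.image_insert]

/-- Every block of a symmetric noncrossing matching is positive, negative, or trivial. -/
lemma block_cases {m : ℕ} {M : Finset (Finset ℤ)} (hM : IsNCSP m M) {b : Finset ℤ}
    (hb : b ∈ M) :
    (∀ x ∈ b, 0 < x) ∨ (∀ x ∈ b, x < 0) ∨ (∃ t : ℤ, 0 < t ∧ t ≤ m ∧ b = {t, -t}) := by
  have mixed : ∀ x y : ℤ, 0 < x → y < 0 → ({x, y} : Finset ℤ) ∈ M → y = -x := by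
    intro x y hx hy hxy
    by_contra hne
    have hmir : ({-x, -y} : Finset ℤ) ∈ M := by
      have := hM.2.2.2.1 _ hxy
      rwa [pair_image_neg] at this
    rcases lt_trichotomy (-y) x with h | h | h
    · -- -x < y < -y < x
      have h1 : ({-x, -y} : Finset ℤ) ∈ M := hmir
      have h2 : ({y, x} : Finset ℤ) ∈ M := by rwa [Finset.pair_comm] at hxy
      exact hM.2.2.2.2 (-x) y (-y) x h1 h2 (by omega) (by omega) (by omega)
    · omega
    · -- y < -x < x < -y
      have h1 : ({y, x} : Finset ℤ) ∈ M := by rwa [Finset.pair_comm] at hxy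
      have h2 : ({-x, -y} : Finset ℤ) ∈ M := hmir
      exact hM.2.2.2.2 y (-x) x (-y) h1 h2 (by omega) (by omega) (by omega)
  obtain ⟨x, y, hxy, rfl⟩ := Finset.card_eq_two.mp (hM.1 _ hb).1
  have hx := mem_pmSet.mp ((hM.1 _ hb).2 (show x ∈ (↑({x, y} : Finset ℤ) : Set ℤ) by simp))
  have hy := mem_pmSet.mp ((hM.1 _ hb).2 (show y ∈ (↑({x, y} : Finset ℤ) : Set ℤ) by simp))
  rcases lt_trichotomy x 0 with hxs | hxs | hxs <;> rcases lt_trichotomy y 0 with hys | hys | hys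
  · refine Or.inr (Or.inl ?_)
    intro z hz
    rcases Finset.mem_insert.mp hz with rfl | hz
    · exact hxs
    · rcases Finset.mem_singleton.mp hz with rfl; exact hys
  · exact absurd hys hy.1
  · have hxe := mixed y x hys hxs (by rwa [Finset.pair_comm] at hb)
    exact Or.inr (Or.inr ⟨y, hys, hy.2.2, by rw [hxe]; exact Finset.pair_comm _ _⟩)
  · exact absurd hxs hx.1
  · exact absurd hxs hx.1
  · exact absurd hxs hx.1
  · have hye := mixed x y hxs hys hb
    exact Or.inr (Or.inr ⟨x, hxs, hx.2.2, by rw [hye]⟩)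
  · exact absurd hys hy.1
  · refine Or.inl ?_
    intro z hz
    rcases Finset.mem_insert.mp hz with rfl | hz
    · exact hxs
    · rcases Finset.mem_singleton.mp hz with rfl; exact hys

lemma triv_norm {m : ℕ} {M : Finset (Finset ℤ)} (hM : IsNCSP m M) {b : Finset ℤ}
    (hb : b ∈ M) (hi : ∃ i : ℤ, b = {i, -i}) :
    ∃ t : ℤ, 0 < t ∧ t ≤ m ∧ b = {t, -t} := by
  rcases block_cases hM hb with h | h | h
  · obtain ⟨i, rfl⟩ := hi
    have h1 := h i (by simp)
    have h2 := h (-i) (by simp)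
    omega
  · obtain ⟨i, rfl⟩ := hi
    have h1 := h i (by simp)
    have h2 := h (-i) (by simp)
    omega
  · exact h

open scoped Classical in
lemma pos_part_NCM {m : ℕ} {M : Finset (Finset ℤ)} (hM : IsNCSP m M)
    {s : Finset ℤ} (hs : ∀ x : ℤ, x ∈ s ↔ (1 ≤ x ∧ x ≤ m ∧
      ∀ b ∈ M, x ∈ b → ¬∃ i : ℤ, b = {i, -i})) :
    NCM (↑s) (M.filter (fun b => (∀ x ∈ b, 0 < x) ∧ ¬∃ i : ℤ, b = {i, -i})) := by
  classical
  refine ⟨?_, ?_, ?_, ?_⟩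
  · intro b hb
    obtain ⟨hbM, hpos, hnt⟩ := Finset.mem_filter.mp hb
    refine ⟨(hM.1 b hbM).1, ?_⟩
    intro z hz
    have hz' : z ∈ b := Finset.mem_coe.mp hz
    have hzp := mem_pmSet.mp ((hM.1 b hbM).2 hz)
    have hz0 := hpos z hz'
    rw [Finset.mem_coe, hs z]
    refine ⟨by omega, by omega, ?_⟩
    intro b' hb' hzb' hib'
    -- z ∈ b and z ∈ b', b' trivial: then b = b' trivial, contra
    by_cases he : b = b'
    · exact hnt (he ▸ hib')
    · have := Finset.disjoint_left.mp (hM.2.1 b hbM b' hb' he) hz' hzb'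
      exact this
  · intro b hb b' hb' hne
    exact hM.2.1 b (Finset.mem_of_mem_filter _ hb) b' (Finset.mem_of_mem_filter _ hb') hne
  · intro x hx
    have hx' := (hs x).mp (Finset.mem_coe.mp hx)
    obtain ⟨b, hb, hxb⟩ := hM.2.2.1 x (mem_pmSet.mpr ⟨by omega, by omega, by omega⟩)
    refine ⟨b, Finset.mem_filter.mpr ⟨hb, ?_, hx'.2.2 b hb hxb⟩, hxb⟩
    rcases block_cases hM hb with h | h | h
    · exact h
    · exfalso; have := h x hxb; omega
    · exfalso
      obtain ⟨t, ht, htm, rfl⟩ := h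
      exact hx'.2.2 _ hb hxb ⟨t, rfl⟩
  · intro i j k l hik hjl hij hjk hkl
    exact hM.2.2.2.2 i j k l (Finset.mem_of_mem_filter _ hik)
      (Finset.mem_of_mem_filter _ hjl) hij hjk hkl

lemma parity_triv {m : ℕ} {M : Finset (Finset ℤ)} (hM : IsNCSP m M)
    (htc : {b : Finset ℤ | b ∈ M ∧ ∃ i : ℤ, b = {i, -i}}.ncard ≤ 1) :
    (Even m ∧ ∀ b ∈ M, ¬∃ i : ℤ, b = {i, -i}) ∨
    (Odd m ∧ ∃ t : ℤ, 0 < t ∧ t ≤ m ∧ ({t, -t} : Finset ℤ) ∈ M ∧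
      ∀ b ∈ M, (∃ i : ℤ, b = {i, -i}) → b = {t, -t}) := by
  classical
  have hfin : {b : Finset ℤ | b ∈ M ∧ ∃ i : ℤ, b = {i, -i}}.Finite :=
    M.finite_toSet.subset (fun b hb => hb.1)
  have huniq : ∀ b ∈ M, (∃ i : ℤ, b = {i, -i}) → ∀ b' ∈ M, (∃ i : ℤ, b' = {i, -i}) →
      b = b' := by
    intro b hb hib b' hb' hib'
    exact (Set.ncard_le_one_iff hfin).mp htc ⟨hb, hib⟩ ⟨hb', hib'⟩
  by_cases hex : ∃ b ∈ M, ∃ i : ℤ, b = {i, -i}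
  · obtain ⟨b, hb, hib⟩ := hex
    obtain ⟨t, ht, htm, rfl⟩ := triv_norm hM hb hib
    right
    have hsodd : Odd m := by
      set s : Finset ℤ := (Finset.Icc (1:ℤ) m).erase t with hsdef
      have hsmem : ∀ x : ℤ, x ∈ s ↔ (1 ≤ x ∧ x ≤ m ∧
          ∀ b' ∈ M, x ∈ b' → ¬∃ i : ℤ, b' = {i, -i}) := by
        intro x
        rw [hsdef, Finset.mem_erase, Finset.mem_Icc]
        constructor
        · rintro ⟨hxt, hx1, hx2⟩
          refine ⟨hx1, hx2, ?_⟩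
          intro b' hb' hxb' hib'
          have := huniq b' hb' hib' _ hb ⟨t, rfl⟩
          subst this
          rcases Finset.mem_insert.mp hxb' with rfl | h
          · exact hxt rfl
          · rcases Finset.mem_singleton.mp h with rfl; omega
        · rintro ⟨hx1, hx2, hx3⟩
          refine ⟨?_, hx1, hx2⟩
          rintro rfl
          exact hx3 _ hb (by simp) ⟨x, rfl⟩
      have := NCM_card (pos_part_NCM hM hsmem)
      have hcard : s.card = m - 1 := by
        rw [hsdef, Finset.card_erase_of_mem (Finset.mem_Icc.mpr ⟨by omega, by omega⟩),
          Int.card_Icc]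
        omega
      have hm1 : 1 ≤ m := by omega
      rw [Nat.odd_iff]
      omega
    exact ⟨hsodd, t, ht, htm, hb, fun b' hb' hib' => huniq b' hb' hib' _ hb ⟨t, rfl⟩⟩
  · left
    have hex' : ∀ b ∈ M, ¬∃ i : ℤ, b = {i, -i} := fun b hb h => hex ⟨b, hb, h⟩
    refine ⟨?_, hex'⟩
    have hsmem : ∀ x : ℤ, x ∈ Finset.Icc (1:ℤ) m ↔ (1 ≤ x ∧ x ≤ m ∧
        ∀ b' ∈ M, x ∈ b' → ¬∃ i : ℤ, b' = {i, -i}) := by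
      intro x
      rw [Finset.mem_Icc]
      constructor
      · rintro ⟨hx1, hx2⟩
        exact ⟨hx1, hx2, fun b' hb' _ hib' => hex' b' hb' hib'⟩
      · rintro ⟨hx1, hx2, _⟩
        exact ⟨hx1, hx2⟩
    have := NCM_card (pos_part_NCM hM hsmem)
    have hcard : (Finset.Icc (1:ℤ) m).card = m := by
      rw [Int.card_Icc]; omega
    rw [Nat.even_iff]
    omega

def gmap : ℤ → ℤ := fun x => if x < 0 then 0 else x

def phi (M : Finset (Finset ℤ)) : Finset (Finset ℤ) :=
  (M.image (Finset.image gmap)).filter (fun b => b.card = 2)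

def psi (M' : Finset (Finset ℤ)) : Finset (Finset ℤ) :=
  (M'.filter (fun b => (0:ℤ) ∉ b)) ∪
  ((M'.filter (fun b => (0:ℤ) ∉ b)).image (Finset.image (fun x => -x)) ∪
  (M'.filter (fun b => (0:ℤ) ∈ b)).image
    (fun b => (b.erase 0) ∪ (b.erase 0).image (fun x => -x)))

lemma image_g_pos {b : Finset ℤ} (h : ∀ x ∈ b, 0 < x) : b.image gmap = b := by
  have : b.image gmap = b.image id := by
    apply Finset.image_congr
    intro x hx
    have := h x (Finset.mem_coe.mp hx)
    simp [gmap]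
    omega
  rw [this, Finset.image_id]

lemma image_g_pair {t : ℤ} (ht : 0 < t) :
    ({t, -t} : Finset ℤ).image gmap = {0, t} := by
  have h1 : gmap t = t := if_neg (by omega)
  have h2 : gmap (-t) = 0 := if_pos (by omega)
  rw [show ({t, -t} : Finset ℤ) = insert t {-t} from rfl, Finset.image_insert,
    Finset.image_singleton, h1, h2]
  exact Finset.pair_comm t 0

lemma image_neg_neg (b : Finset ℤ) :
    (b.image (fun x => -x)).image (fun x => -x) = b := by
  rw [Finset.image_image]
  simp

lemma mem_phi {m : ℕ} {M : Finset (Finset ℤ)} (hM : IsNCSP m M) {c : Finset ℤ} :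
    c ∈ phi M ↔ ((c ∈ M ∧ ∀ x ∈ c, 0 < x) ∨
      (∃ t : ℤ, 0 < t ∧ t ≤ m ∧ ({t, -t} : Finset ℤ) ∈ M ∧ c = {0, t})) := by
  simp only [phi, Finset.mem_filter, Finset.mem_image]
  constructor
  · rintro ⟨⟨b, hb, rfl⟩, hcard⟩
    rcases block_cases hM hb with h | h | h
    · rw [image_g_pos h]
      exact Or.inl ⟨hb, h⟩
    · exfalso
      have hne : b.Nonempty := Finset.card_pos.mp (by rw [(hM.1 b hb).1]; norm_num)
      have : b.image gmap = {0} := by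
        ext z
        simp only [Finset.mem_image, Finset.mem_singleton]
        constructor
        · rintro ⟨x, hx, rfl⟩
          have := h x hx
          simp [gmap]
          omega
        · rintro rfl
          obtain ⟨x, hx⟩ := hne
          exact ⟨x, hx, if_pos (h x hx)⟩
      rw [this] at hcard
      simp at hcard
    · obtain ⟨t, ht, htm, rfl⟩ := h
      rw [image_g_pair ht]
      exact Or.inr ⟨t, ht, htm, hb, rfl⟩
  · rintro (⟨hc, hpos⟩ | ⟨t, ht, htm, htb, rfl⟩)
    · exact ⟨⟨c, hc, image_g_pos hpos⟩, (hM.1 _ hc).1⟩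
    · exact ⟨⟨{t, -t}, htb, image_g_pair ht⟩, Finset.card_pair (by omega)⟩

lemma mem_psi {M' : Finset (Finset ℤ)} {b : Finset ℤ} :
    b ∈ psi M' ↔ (b ∈ M' ∧ (0:ℤ) ∉ b) ∨
      ((∃ c, (c ∈ M' ∧ (0:ℤ) ∉ c) ∧ c.image (fun x => -x) = b) ∨
      (∃ c, (c ∈ M' ∧ (0:ℤ) ∈ c) ∧ (c.erase 0) ∪ (c.erase 0).image (fun x => -x) = b)) := by
  simp only [psi, Finset.mem_union, Finset.mem_filter, Finset.mem_image]

section PsiLemma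

variable {m : ℕ} {lo : ℤ} {M' : Finset (Finset ℤ)}

lemma hA_bound (h0 : lo = 0 ∨ lo = 1) (hM' : NCM (↑(Finset.Ico lo ((m:ℤ)+1))) M')
    {c : Finset ℤ} (hc : c ∈ M') (h0c : (0:ℤ) ∉ c) : ∀ z ∈ c, 1 ≤ z ∧ z ≤ m := by
  intro z hz
  have := (hM'.1 c hc).2 (Finset.mem_coe.mpr hz)
  rw [Finset.mem_coe, Finset.mem_Ico] at this
  have hz0 : z ≠ 0 := fun h => h0c (h ▸ hz)
  omega

lemma hC_shape (h0 : lo = 0 ∨ lo = 1) (hM' : NCM (↑(Finset.Ico lo ((m:ℤ)+1))) M')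
    {c : Finset ℤ} (hc : c ∈ M') (h0c : (0:ℤ) ∈ c) :
    ∃ t : ℤ, 1 ≤ t ∧ t ≤ m ∧ c = {0, t} := by
  obtain ⟨t, ht0, rfl⟩ := block_pair hM' hc h0c
  have := (hM'.1 _ hc).2 (show t ∈ (↑({(0:ℤ), t} : Finset ℤ) : Set ℤ) by simp)
  rw [Finset.mem_coe, Finset.mem_Ico] at this
  exact ⟨t, by omega, by omega, rfl⟩

lemma C_block_eq {t : ℤ} (ht : t ≠ 0) :
    (({0, t} : Finset ℤ).erase 0) ∪ (({0, t} : Finset ℤ).erase 0).image (fun x => -x)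
      = ({t, -t} : Finset ℤ) := by
  have he : ({0, t} : Finset ℤ).erase 0 = {t} := by
    rw [show ({0, t} : Finset ℤ) = insert 0 {t} from rfl,
      Finset.erase_insert (by simpa using Ne.symm ht)]
  rw [he, Finset.image_singleton]
  ext z
  simp

/-- classification of pair blocks of `psi M'` -/
lemma psi_classify (h0 : lo = 0 ∨ lo = 1) (hM' : NCM (↑(Finset.Ico lo ((m:ℤ)+1))) M')
    {u v : ℤ} (huv : ({u, v} : Finset ℤ) ∈ psi M') :
    (({u, v} : Finset ℤ) ∈ M' ∧ (1 ≤ u ∧ u ≤ m) ∧ (1 ≤ v ∧ v ≤ m)) ∨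
    (({-u, -v} : Finset ℤ) ∈ M' ∧ (-(m:ℤ) ≤ u ∧ u ≤ -1) ∧ (-(m:ℤ) ≤ v ∧ v ≤ -1)) ∨
    (∃ t : ℤ, 1 ≤ t ∧ t ≤ m ∧ ({0, t} : Finset ℤ) ∈ M' ∧
      ((u = t ∧ v = -t) ∨ (u = -t ∧ v = t))) := by
  rcases mem_psi.mp huv with ⟨hb, h0b⟩ | ⟨c, ⟨hc, h0c⟩, hce⟩ | ⟨c, ⟨hc, h0c⟩, hce⟩
  · have hu := hA_bound h0 hM' hb h0b u (by simp)
    have hv := hA_bound h0 hM' hb h0b v (by simp)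
    exact Or.inl ⟨hb, hu, hv⟩
  · have hcpair : c = ({-u, -v} : Finset ℤ) := by
      have := image_neg_neg c
      rw [hce] at this
      rw [← this, pair_image_neg]
    subst hcpair
    have hu := hA_bound h0 hM' hc h0c (-u) (by simp)
    have hv := hA_bound h0 hM' hc h0c (-v) (by simp)
    refine Or.inr (Or.inl ⟨hc, by omega, by omega⟩)
  · obtain ⟨t, ht1, htm, rfl⟩ := hC_shape h0 hM' hc h0c
    rw [C_block_eq (by omega)] at hce
    exact Or.inr (Or.inr ⟨t, ht1, htm, hc, pair_eq hce.symm⟩)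

lemma psi_IsNCSP (h0 : lo = 0 ∨ lo = 1) (hM' : NCM (↑(Finset.Ico lo ((m:ℤ)+1))) M') :
    IsNCSP m (psi M') := by
  classical
  have zero_unique : ∀ c ∈ M', ∀ c' ∈ M', (0:ℤ) ∈ c → (0:ℤ) ∈ c' → c = c' := by
    intro c hc c' hc' h1 h2
    by_contra hne
    exact Finset.disjoint_left.mp (hM'.2.1 c hc c' hc' hne) h1 h2
  refine ⟨?_, ?_, ?_, ?_, ?_⟩
  · -- blocks
    intro b hb
    rcases mem_psi.mp hb with ⟨hbM, h0b⟩ | ⟨c, ⟨hc, h0c⟩, hce⟩ | ⟨c, ⟨hc, h0c⟩, hce⟩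
    · refine ⟨(hM'.1 b hbM).1, ?_⟩
      intro z hz
      have := hA_bound h0 hM' hbM h0b z (Finset.mem_coe.mp hz)
      exact mem_pmSet.mpr ⟨by omega, by omega, by omega⟩
    · subst hce
      refine ⟨by rw [Finset.card_image_of_injective _ neg_injective]; exact (hM'.1 c hc).1, ?_⟩
      intro z hz
      rw [Finset.mem_coe, Finset.mem_image] at hz
      obtain ⟨x, hx, rfl⟩ := hz
      have := hA_bound h0 hM' hc h0c x hx
      exact mem_pmSet.mpr ⟨by omega, by omega, by omega⟩
    · obtain ⟨t, ht1, htm, rfl⟩ := hC_shape h0 hM' hc h0c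
      rw [C_block_eq (by omega)] at hce
      subst hce
      refine ⟨Finset.card_pair (by omega), ?_⟩
      intro z hz
      rw [Finset.mem_coe] at hz
      rcases Finset.mem_insert.mp hz with rfl | hz
      · exact mem_pmSet.mpr ⟨by omega, by omega, by omega⟩
      · rcases Finset.mem_singleton.mp hz with rfl
        exact mem_pmSet.mpr ⟨by omega, by omega, by omega⟩
  · -- disjointness
    intro b hb b' hb' hne
    have negdisj : ∀ c c' : Finset ℤ, c ∈ M' → (0:ℤ) ∉ c → c' ∈ M' → (0:ℤ) ∉ c' →
        Disjoint c (c'.image (fun x => -x)) := by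
      intro c c' hc h0c hc' h0c'
      rw [Finset.disjoint_left]
      intro z hz hz'
      rw [Finset.mem_image] at hz'
      obtain ⟨x, hx, rfl⟩ := hz'
      have := hA_bound h0 hM' hc h0c _ hz
      have := hA_bound h0 hM' hc' h0c' x hx
      omega
    have Cdisj : ∀ c c' : Finset ℤ, c ∈ M' → (0:ℤ) ∉ c → c' ∈ M' → (0:ℤ) ∈ c' →
        ∀ t : ℤ, c' = {0, t} →
        Disjoint c ({t, -t} : Finset ℤ) ∧ Disjoint (c.image (fun x => -x)) ({t, -t} : Finset ℤ) := by
      intro c c' hc h0c hc' h0c' t hct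
      have htc : t ∉ c := by
        intro htc
        have hnec : c ≠ c' := by
          intro h; subst h; exact h0c (hct ▸ (by simp))
        have := Finset.disjoint_left.mp (hM'.2.1 c hc c' hc' hnec) htc
        rw [hct] at this
        simp at this
      have hbnd := hA_bound h0 hM' hc h0c
      have ht1 : 1 ≤ t ∧ t ≤ m := by
        have := (hM'.1 c' hc').2 (show t ∈ (↑c' : Set ℤ) by rw [hct]; simp)
        rw [Finset.mem_coe, Finset.mem_Ico] at this
        have hcard := (hM'.1 c' hc').1
        have ht0 : t ≠ 0 := by
          intro h; subst h; rw [hct] at hcard; simp at hcard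
        omega
      constructor
      · rw [Finset.disjoint_left]
        intro z hz hz'
        rcases Finset.mem_insert.mp hz' with rfl | hz'
        · exact htc hz
        · rcases Finset.mem_singleton.mp hz' with rfl
          have := hbnd _ hz
          omega
      · rw [Finset.disjoint_left]
        intro z hz hz'
        rw [Finset.mem_image] at hz
        obtain ⟨x, hx, rfl⟩ := hz
        have hxb := hbnd x hx
        rcases Finset.mem_insert.mp hz' with h | h
        · omega
        · rcases Finset.mem_singleton.mp h with h
          have : x = t := by omega
          exact htc (this ▸ hx)
    rcases mem_psi.mp hb with ⟨hbM, h0b⟩ | ⟨c, ⟨hc, h0c⟩, hce⟩ | ⟨c, ⟨hc, h0c⟩, hce⟩ <;>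
      rcases mem_psi.mp hb' with ⟨hbM', h0b'⟩ | ⟨c', ⟨hc', h0c'⟩, hce'⟩ | ⟨c', ⟨hc', h0c'⟩, hce'⟩
    · exact hM'.2.1 b hbM b' hbM' hne
    · subst hce'; exact negdisj _ _ hbM h0b hc' h0c'
    · obtain ⟨t, ht1, htm, rfl⟩ := hC_shape h0 hM' hc' h0c'
      rw [C_block_eq (by omega)] at hce'
      subst hce'
      exact (Cdisj b _ hbM h0b hc' h0c' t rfl).1
    · subst hce; exact (negdisj _ _ hbM' h0b' hc h0c).symm
    · subst hce; subst hce'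
      have hcc : c ≠ c' := fun h => hne (by rw [h])
      exact (Finset.disjoint_image neg_injective).mpr (hM'.2.1 c hc c' hc' hcc)
    · obtain ⟨t, ht1, htm, rfl⟩ := hC_shape h0 hM' hc' h0c'
      rw [C_block_eq (by omega)] at hce'
      subst hce; subst hce'
      exact (Cdisj c _ hc h0c hc' h0c' t rfl).2
    · obtain ⟨t, ht1, htm, rfl⟩ := hC_shape h0 hM' hc h0c
      rw [C_block_eq (by omega)] at hce
      subst hce
      exact (Cdisj b' _ hbM' h0b' hc h0c t rfl).1.symm
    · obtain ⟨t, ht1, htm, rfl⟩ := hC_shape h0 hM' hc h0c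
      rw [C_block_eq (by omega)] at hce
      subst hce; subst hce'
      exact (Cdisj c' _ hc' h0c' hc h0c t rfl).2.symm
    · exfalso
      have := zero_unique c hc c' hc' h0c h0c'
      subst this
      exact hne (by rw [← hce, ← hce'])
  · -- cover
    intro x hx
    obtain ⟨hx0, hxl, hxu⟩ := mem_pmSet.mp hx
    rcases lt_trichotomy x 0 with hxs | hxs | hxs
    · -- negative
      obtain ⟨c, hc, hxc⟩ := hM'.2.2.1 (-x) (by
        rw [Finset.mem_coe, Finset.mem_Ico]; omega)
      by_cases h0c : (0:ℤ) ∈ c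
      · obtain ⟨t, ht1, htm, rfl⟩ := hC_shape h0 hM' hc h0c
        have hxt : -x = t := by
          rcases Finset.mem_insert.mp hxc with h | h
          · omega
          · exact Finset.mem_singleton.mp h
        refine ⟨{t, -t}, mem_psi.mpr (Or.inr (Or.inr ⟨{0, t}, ⟨hc, by simp⟩,
          C_block_eq (by omega)⟩)), ?_⟩
        simp [Finset.mem_insert]
        omega
      · refine ⟨c.image (fun z => -z), mem_psi.mpr (Or.inr (Or.inl ⟨c, ⟨hc, h0c⟩, rfl⟩)), ?_⟩
        rw [Finset.mem_image]
        exact ⟨-x, hxc, by omega⟩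
    · omega
    · -- positive
      obtain ⟨c, hc, hxc⟩ := hM'.2.2.1 x (by
        rw [Finset.mem_coe, Finset.mem_Ico]; omega)
      by_cases h0c : (0:ℤ) ∈ c
      · obtain ⟨t, ht1, htm, rfl⟩ := hC_shape h0 hM' hc h0c
        have hxt : x = t := by
          rcases Finset.mem_insert.mp hxc with h | h
          · omega
          · exact Finset.mem_singleton.mp h
        refine ⟨{t, -t}, mem_psi.mpr (Or.inr (Or.inr ⟨{0, t}, ⟨hc, by simp⟩,
          C_block_eq (by omega)⟩)), by simp [hxt]⟩
      · exact ⟨c, mem_psi.mpr (Or.inl ⟨hc, h0c⟩), hxc⟩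
  · -- symmetry
    intro b hb
    rcases mem_psi.mp hb with ⟨hbM, h0b⟩ | ⟨c, ⟨hc, h0c⟩, hce⟩ | ⟨c, ⟨hc, h0c⟩, hce⟩
    · exact mem_psi.mpr (Or.inr (Or.inl ⟨b, ⟨hbM, h0b⟩, rfl⟩))
    · subst hce
      rw [image_neg_neg]
      exact mem_psi.mpr (Or.inl ⟨hc, h0c⟩)
    · obtain ⟨t, ht1, htm, rfl⟩ := hC_shape h0 hM' hc h0c
      rw [C_block_eq (by omega)] at hce
      subst hce
      rw [pair_image_neg, neg_neg]
      rw [Finset.pair_comm]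
      exact hb
  · -- noncrossing
    intro i j k l hik hjl hij hjk hkl
    rcases psi_classify h0 hM' hik with ⟨h1, hb1, hb2⟩ | ⟨h1, hb1, hb2⟩ | ⟨t, ht1, htm, h1, hc⟩ <;>
      rcases psi_classify h0 hM' hjl with ⟨h2, hb3, hb4⟩ | ⟨h2, hb3, hb4⟩ | ⟨t', ht1', htm', h2, hc'⟩
    · exact hM'.2.2.2 i j k l h1 h2 hij hjk hkl
    · omega
    · rcases hc' with ⟨rfl, rfl⟩ | ⟨rfl, rfl⟩
      · omega
      · omega
    · omega
    · -- both negative: mirror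
      have h1' : ({-l, -j} : Finset ℤ) ∈ M' := by rwa [Finset.pair_comm] at h2
      have h2' : ({-k, -i} : Finset ℤ) ∈ M' := by rwa [Finset.pair_comm] at h1
      exact hM'.2.2.2 (-l) (-k) (-j) (-i) h1' h2' (by omega) (by omega) (by omega)
    · rcases hc' with ⟨rfl, rfl⟩ | ⟨rfl, rfl⟩
      · omega
      · -- j = -t', l = t', {i,k} negative
        have h2' : ({-k, -i} : Finset ℤ) ∈ M' := by rwa [Finset.pair_comm] at h1
        exact hM'.2.2.2 0 (-k) l (-i) h2 h2' (by omega) (by omega) (by omega)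
    · rcases hc with ⟨rfl, rfl⟩ | ⟨rfl, rfl⟩
      · omega
      · -- i = -t, k = t, {j,l} positive
        exact hM'.2.2.2 0 j k l h1 h2 (by omega) (by omega) (by omega)
    · rcases hc with ⟨rfl, rfl⟩ | ⟨rfl, rfl⟩ <;> omega
    · rcases hc with ⟨hi, hk⟩ | ⟨hi, hk⟩ <;> rcases hc' with ⟨hj, hl⟩ | ⟨hj, hl⟩
      · omega
      · omega
      · have : t = t' := by
          by_contra hne
          have hpairne : ({0, t} : Finset ℤ) ≠ {0, t'} := by
            intro h
            rcases pair_eq h with ⟨_, h⟩ | ⟨h, h'⟩ <;> omega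
          have := Finset.disjoint_left.mp (hM'.2.1 _ h1 _ h2 hpairne)
            (show (0:ℤ) ∈ ({0, t} : Finset ℤ) by simp)
          simp at this
        omega
      · omega

end PsiLemma

section PsiLemma2

variable {m : ℕ} {lo : ℤ} {M' : Finset (Finset ℤ)}

lemma psi_tcount (h0 : lo = 0 ∨ lo = 1) (hM' : NCM (↑(Finset.Ico lo ((m:ℤ)+1))) M') :
    {b : Finset ℤ | b ∈ psi M' ∧ ∃ i : ℤ, b = {i, -i}}.ncard ≤ 1 := by
  classical
  set C : Finset (Finset ℤ) := (M'.filter (fun b => (0:ℤ) ∈ b)).image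
    (fun b => (b.erase 0) ∪ (b.erase 0).image (fun x => -x)) with hC
  have hsub : {b : Finset ℤ | b ∈ psi M' ∧ ∃ i : ℤ, b = {i, -i}} ⊆ ↑C := by
    rintro b ⟨hb, i, rfl⟩
    have hcard := ((psi_IsNCSP h0 hM').1 _ hb).1
    have hi0 : i ≠ 0 := by
      rintro rfl
      simp at hcard
    rcases mem_psi.mp hb with ⟨hbM, h0b⟩ | ⟨c, ⟨hc, h0c⟩, hce⟩ | ⟨c, ⟨hc, h0c⟩, hce⟩
    · exfalso
      have h1 := hA_bound h0 hM' hbM h0b i (by simp)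
      have h2 := hA_bound h0 hM' hbM h0b (-i) (by simp)
      omega
    · exfalso
      have hc' : c = ({-i, i} : Finset ℤ) := by
        have h := image_neg_neg c
        rw [hce] at h
        rw [← h, pair_image_neg, neg_neg]
      subst hc'
      have h1 := hA_bound h0 hM' hc h0c (-i) (by simp)
      have h2 := hA_bound h0 hM' hc h0c i (by simp)
      omega
    · exact Finset.mem_coe.mpr (Finset.mem_image.mpr ⟨c, Finset.mem_filter.mpr ⟨hc, h0c⟩, hce⟩)
  have hCle : C.card ≤ 1 := by
    apply le_trans Finset.card_image_le
    rw [Finset.card_le_one]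
    intro a ha b hb
    obtain ⟨ha1, ha2⟩ := Finset.mem_filter.mp ha
    obtain ⟨hb1, hb2⟩ := Finset.mem_filter.mp hb
    by_contra hne
    exact Finset.disjoint_left.mp (hM'.2.1 a ha1 b hb1 hne) ha2 hb2
  calc {b : Finset ℤ | b ∈ psi M' ∧ ∃ i : ℤ, b = {i, -i}}.ncard
      ≤ (↑C : Set (Finset ℤ)).ncard := Set.ncard_le_ncard hsub C.finite_toSet
    _ = C.card := Set.ncard_coe_finset C
    _ ≤ 1 := hCle

end PsiLemma2

lemma phi_NCM {m : ℕ} {M : Finset (Finset ℤ)} (hM : IsNCSP m M)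
    (htc : {b : Finset ℤ | b ∈ M ∧ ∃ i : ℤ, b = {i, -i}}.ncard ≤ 1)
    {lo : ℤ} (h0 : lo = 0 ∨ lo = 1)
    (hodd : (∃ b ∈ M, ∃ i : ℤ, b = {i, -i}) ↔ lo = 0) :
    NCM (↑(Finset.Ico lo ((m:ℤ)+1))) (phi M) := by
  classical
  have hfin : {b : Finset ℤ | b ∈ M ∧ ∃ i : ℤ, b = {i, -i}}.Finite :=
    M.finite_toSet.subset (fun b hb => hb.1)
  have huniq : ∀ b ∈ M, (∃ i : ℤ, b = {i, -i}) → ∀ b' ∈ M, (∃ i : ℤ, b' = {i, -i}) →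
      b = b' := by
    intro b hb hib b' hb' hib'
    exact (Set.ncard_le_one_iff hfin).mp htc ⟨hb, hib⟩ ⟨hb', hib'⟩
  have hposbound : ∀ b ∈ M, (∀ x ∈ b, 0 < x) → ∀ z ∈ b, 1 ≤ z ∧ z ≤ m := by
    intro b hb hpos z hz
    have := mem_pmSet.mp ((hM.1 b hb).2 (Finset.mem_coe.mpr hz))
    have := hpos z hz
    omega
  refine ⟨?_, ?_, ?_, ?_⟩
  · -- blocks
    intro c hc
    rcases (mem_phi hM).mp hc with ⟨hcM, hpos⟩ | ⟨t, ht, htm, htb, rfl⟩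
    · refine ⟨(hM.1 _ hcM).1, ?_⟩
      intro z hz
      have := hposbound _ hcM hpos z (Finset.mem_coe.mp hz)
      rw [Finset.mem_coe, Finset.mem_Ico]
      omega
    · have hlo0 : lo = 0 := hodd.mp ⟨{t, -t}, htb, t, rfl⟩
      refine ⟨Finset.card_pair (by omega), ?_⟩
      intro z hz
      rw [Finset.mem_coe] at hz
      rw [Finset.mem_coe, Finset.mem_Ico]
      rcases Finset.mem_insert.mp hz with rfl | hz
      · omega
      · rcases Finset.mem_singleton.mp hz with rfl
        omega
  · -- disjoint
    intro c hc c' hc' hne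
    have key : ∀ d d' : Finset ℤ, d ∈ M → (∀ x ∈ d, 0 < x) →
        ∀ t : ℤ, 0 < t → ({t, -t} : Finset ℤ) ∈ M → Disjoint d ({0, t} : Finset ℤ) := by
      intro d d' hd hdpos t ht htb
      rw [Finset.disjoint_left]
      intro z hz hz'
      have hzpos := hdpos z hz
      have hzt : z = t := by
        rcases Finset.mem_insert.mp hz' with rfl | h
        · omega
        · exact Finset.mem_singleton.mp h
      have hdne : d ≠ ({t, -t} : Finset ℤ) := by
        rintro rfl
        have := hdpos (-t) (by simp)
        omega
      exact Finset.disjoint_left.mp (hM.2.1 d hd _ htb hdne) hz (by rw [hzt]; simp)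
    rcases (mem_phi hM).mp hc with ⟨hcM, hpos⟩ | ⟨t, ht, htm, htb, rfl⟩ <;>
      rcases (mem_phi hM).mp hc' with ⟨hcM', hpos'⟩ | ⟨t', ht', htm', htb', rfl⟩
    · exact hM.2.1 _ hcM _ hcM' hne
    · exact key c c hcM hpos t' ht' htb'
    · exact (key c' c' hcM' hpos' t ht htb).symm
    · exfalso
      have := huniq _ htb ⟨t, rfl⟩ _ htb' ⟨t', rfl⟩
      rcases pair_eq this with ⟨h1, _⟩ | ⟨h1, h2⟩
      · exact hne (by rw [h1])
      · omega
  · -- cover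
    intro x hx
    rw [Finset.mem_coe, Finset.mem_Ico] at hx
    rcases lt_trichotomy x 0 with hxs | rfl | hxs
    · omega
    · -- x = 0
      have hlo0 : lo = 0 := by omega
      obtain ⟨b, hb, hib⟩ := hodd.mpr hlo0
      obtain ⟨t, ht, htm, rfl⟩ := triv_norm hM hb hib
      exact ⟨{0, t}, (mem_phi hM).mpr (Or.inr ⟨t, ht, htm, hb, rfl⟩), by simp⟩
    · obtain ⟨b, hb, hxb⟩ := hM.2.2.1 x (mem_pmSet.mpr ⟨by omega, by omega, by omega⟩)
      rcases block_cases hM hb with h | h | h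
      · exact ⟨b, (mem_phi hM).mpr (Or.inl ⟨hb, h⟩), hxb⟩
      · exfalso
        have := h x hxb
        omega
      · obtain ⟨t, ht, htm, rfl⟩ := h
        have hxt : x = t := by
          rcases Finset.mem_insert.mp hxb with rfl | hh
          · rfl
          · rcases Finset.mem_singleton.mp hh with rfl
            omega
        exact ⟨{0, t}, (mem_phi hM).mpr (Or.inr ⟨t, ht, htm, hb, rfl⟩), by simp [hxt]⟩
  · -- noncrossing
    intro i j k l hik hjl hij hjk hkl
    rcases (mem_phi hM).mp hik with ⟨h1, hpos1⟩ | ⟨t, ht, htm, htb, he⟩ <;>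
      rcases (mem_phi hM).mp hjl with ⟨h2, hpos2⟩ | ⟨t', ht', htm', htb', he'⟩
    · exact hM.2.2.2.2 i j k l h1 h2 hij hjk hkl
    · -- {j,l} = {0,t'}: j = 0 or l = 0, but i < j and i > 0
      have hi := hpos1 i (by simp)
      rcases pair_eq he' with ⟨rfl, rfl⟩ | ⟨rfl, rfl⟩ <;> omega
    · -- {i,k} = {0,t}
      have hik' : i = 0 ∧ k = t := by
        rcases pair_eq he with ⟨h1, h2⟩ | ⟨h1, h2⟩ <;> omega
      obtain ⟨rfl, rfl⟩ := hik'
      have hj := hpos2 j (by simp)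
      have hl := hpos2 l (by simp)
      have hmir : ({-k, k} : Finset ℤ) ∈ M := by rwa [Finset.pair_comm] at htb
      exact hM.2.2.2.2 (-k) j k l hmir h2 (by omega) (by omega) (by omega)
    · rcases pair_eq he with ⟨h1, h2⟩ | ⟨h1, h2⟩ <;>
        rcases pair_eq he' with ⟨h3, h4⟩ | ⟨h3, h4⟩ <;> omega

lemma psi_phi_id {m : ℕ} {M : Finset (Finset ℤ)} (hM : IsNCSP m M) : psi (phi M) = M := by
  ext b
  constructor
  · intro hb
    rcases mem_psi.mp hb with ⟨hbP, h0b⟩ | ⟨c, ⟨hc, h0c⟩, hce⟩ | ⟨c, ⟨hc, h0c⟩, hce⟩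
    · rcases (mem_phi hM).mp hbP with ⟨hbM, _⟩ | ⟨t, ht, htm, htb, rfl⟩
      · exact hbM
      · exact absurd (by simp : (0:ℤ) ∈ ({0, t} : Finset ℤ)) h0b
    · rcases (mem_phi hM).mp hc with ⟨hcM, _⟩ | ⟨t, ht, htm, htb, rfl⟩
      · rw [← hce]
        exact hM.2.2.2.1 c hcM
      · exact absurd (by simp : (0:ℤ) ∈ ({0, t} : Finset ℤ)) h0c
    · rcases (mem_phi hM).mp hc with ⟨hcM, hpos⟩ | ⟨t, ht, htm, htb, rfl⟩
      · exact absurd (hpos 0 h0c) (lt_irrefl 0)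
      · rw [C_block_eq (by omega : t ≠ 0)] at hce
        rw [← hce]
        exact htb
  · intro hb
    rcases block_cases hM hb with h | h | h
    · refine mem_psi.mpr (Or.inl ⟨(mem_phi hM).mpr (Or.inl ⟨hb, h⟩), ?_⟩)
      intro h0
      exact absurd (h 0 h0) (lt_irrefl 0)
    · have hcM : b.image (fun x => -x) ∈ M := hM.2.2.2.1 b hb
      have hcpos : ∀ x ∈ b.image (fun x => -x), 0 < x := by
        intro x hx
        rw [Finset.mem_image] at hx
        obtain ⟨y, hy, rfl⟩ := hx
        have := h y hy
        omega
      refine mem_psi.mpr (Or.inr (Or.inl ⟨b.image (fun x => -x),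
        ⟨(mem_phi hM).mpr (Or.inl ⟨hcM, hcpos⟩), ?_⟩, image_neg_neg b⟩))
      intro h0
      exact absurd (hcpos 0 h0) (lt_irrefl 0)
    · obtain ⟨t, ht, htm, rfl⟩ := h
      exact mem_psi.mpr (Or.inr (Or.inr ⟨{0, t},
        ⟨(mem_phi hM).mpr (Or.inr ⟨t, ht, htm, hb, rfl⟩), by simp⟩, C_block_eq (by omega)⟩))

lemma phi_psi_id {m : ℕ} {lo : ℤ} {M' : Finset (Finset ℤ)}
    (h0 : lo = 0 ∨ lo = 1) (hM' : NCM (↑(Finset.Ico lo ((m:ℤ)+1))) M') :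
    phi (psi M') = M' := by
  have hpsi := psi_IsNCSP h0 hM'
  ext c
  constructor
  · intro hc
    rcases (mem_phi hpsi).mp hc with ⟨hcP, hpos⟩ | ⟨t, ht, htm, htb, rfl⟩
    · rcases mem_psi.mp hcP with ⟨hcM, _⟩ | ⟨d, ⟨hd, h0d⟩, hde⟩ | ⟨d, ⟨hd, h0d⟩, hde⟩
      · exact hcM
      · exfalso
        have hdne : d.Nonempty := Finset.card_pos.mp (by rw [(hM'.1 d hd).1]; norm_num)
        obtain ⟨x, hx⟩ := hdne
        have hxm : -x ∈ c := by
          rw [← hde]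
          exact Finset.mem_image_of_mem _ hx
        have := hA_bound h0 hM' hd h0d x hx
        have := hpos _ hxm
        omega
      · exfalso
        obtain ⟨t, ht1, htm, rfl⟩ := hC_shape h0 hM' hd h0d
        rw [C_block_eq (by omega)] at hde
        have : -t ∈ c := by rw [← hde]; simp
        have := hpos _ this
        omega
    · rcases psi_classify h0 hM' htb with ⟨_, hb1, hb2⟩ | ⟨_, hb1, hb2⟩ |
        ⟨t'', ht1'', htm'', h2'', hc''⟩
      · omega
      · omega
      · rcases hc'' with ⟨rfl, _⟩ | ⟨h1, h2⟩
        · exact h2''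
        · omega
  · intro hc
    by_cases h0c : (0:ℤ) ∈ c
    · obtain ⟨t, ht1, htm, rfl⟩ := hC_shape h0 hM' hc h0c
      refine (mem_phi hpsi).mpr (Or.inr ⟨t, by omega, htm, ?_, rfl⟩)
      exact mem_psi.mpr (Or.inr (Or.inr ⟨{0, t}, ⟨hc, by simp⟩, C_block_eq (by omega)⟩))
    · refine (mem_phi hpsi).mpr (Or.inl ⟨mem_psi.mpr (Or.inl ⟨hc, h0c⟩), ?_⟩)
      intro x hx
      have := hA_bound h0 hM' hc h0c x hx
      omega

lemma main_count (m : ℕ) :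
    {M : Finset (Finset ℤ) | IsNCSP m M ∧
      {b : Finset ℤ | b ∈ M ∧ ∃ i : ℤ, b = {i, -i}}.ncard ≤ 1}.ncard
      = catalan ((m + 1) / 2) := by
  classical
  set k := (m + 1) / 2 with hk
  set lo : ℤ := (m : ℤ) + 1 - 2 * k with hlo
  have h0 : lo = 0 ∨ lo = 1 := by omega
  have hparodd : m % 2 = 1 → lo = 0 := by omega
  have hpareven : m % 2 = 0 → lo = 1 := by omega
  set S := {M : Finset (Finset ℤ) | IsNCSP m M ∧
      {b : Finset ℤ | b ∈ M ∧ ∃ i : ℤ, b = {i, -i}}.ncard ≤ 1} with hS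
  have hmaps : ∀ M ∈ S, phi M ∈ NCMF (Finset.Ico lo ((m:ℤ)+1)) := by
    rintro M ⟨hM, htc⟩
    have hoddiff : (∃ b ∈ M, ∃ i : ℤ, b = {i, -i}) ↔ lo = 0 := by
      constructor
      · rintro ⟨b, hb, hib⟩
        rcases parity_triv hM htc with ⟨he, hno⟩ | ⟨ho, _⟩
        · exact absurd hib (hno b hb)
        · exact hparodd (Nat.odd_iff.mp ho)
      · intro hlo0
        rcases parity_triv hM htc with ⟨he, _⟩ | ⟨ho, t, ht, htm, htb, _⟩
        · have := hpareven (Nat.even_iff.mp he)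
          omega
        · exact ⟨{t, -t}, htb, t, rfl⟩
    exact mem_NCMF.mpr (phi_NCM hM htc h0 hoddiff)
  have hinj : Set.InjOn phi S := by
    intro M₁ h₁ M₂ h₂ he
    rw [← psi_phi_id h₁.1, ← psi_phi_id h₂.1, he]
  have hsurj : Set.SurjOn phi S (↑(NCMF (Finset.Ico lo ((m:ℤ)+1)))) := by
    intro M' hM'
    have hN := mem_NCMF.mp (Finset.mem_coe.mp hM')
    exact ⟨psi M', ⟨psi_IsNCSP h0 hN, psi_tcount h0 hN⟩, phi_psi_id h0 hN⟩
  have himage : phi '' S = ↑(NCMF (Finset.Ico lo ((m:ℤ)+1))) := by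
    apply Set.Subset.antisymm
    · rintro _ ⟨M, hM, rfl⟩
      exact hmaps M hM
    · exact hsurj
  calc S.ncard = (phi '' S).ncard := (Set.ncard_image_of_injOn hinj).symm
    _ = (↑(NCMF (Finset.Ico lo ((m:ℤ)+1))) : Set (Finset (Finset ℤ))).ncard := by rw [himage]
    _ = (NCMF (Finset.Ico lo ((m:ℤ)+1))).card := Set.ncard_coe_finset _
    _ = Fc k := by
        rw [show (m:ℤ) + 1 = lo + 2 * k from by omega]
        exact NCMF_Ico_card' lo k
    _ = catalan k := Fc_eq_catalan k

/-- The number of symmetric noncrossing perfect matchings on `[±m]` with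
at most one trivial block (a block of the form `{i, -i}`) equals the Catalan number
`C_k = C(2k, k)/(k+1)` where `k = ⌈m/2⌉`. -/
theorem stmt_12 (m : ℕ) :
    (( (m + 1) / 2 + 1) *
      {M : Finset (Finset ℤ) | IsNCSP m M ∧
        {b : Finset ℤ | b ∈ M ∧ ∃ i : ℤ, b = {i, -i}}.ncard ≤ 1}.ncard)
    = Nat.choose (2 * ((m + 1) / 2)) ((m + 1) / 2) := by
  rw [main_count m, succ_mul_catalan_eq_centralBinom]
  rfl
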